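/- For every integer n ≥ 2, every real number κ < 0, every constant ω_n > 0 and every R > 0, the test function f_R satisfies ∫_{R/2}^{R} f_R'(s)²·S^κ_n(s) ds ≤ Λ(R)·∫_{R/2}^{R} f_R(s)²·S^κ_n(s) ds, where Λ(R) = ((n−1)²/4)·Ct_κ(R/2)² + 8π²/R² + (4π(n−1)/R)·Ct_κ(R/2). -/

import Mathlib

set_option maxHeartbeats 2000000 in
open Real in
/-- For n ≥ 2, κ < 0, ω_n > 0 and R > 0, the test function
f_R(s) = sin(2π(s − R/2)/R)/(S^κ_n(s))^{1/2} satisfies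
∫_{R/2}^{R} f_R'(s)²·S^κ_n(s) ds ≤ Λ(R)·∫_{R/2}^{R} f_R(s)²·S^κ_n(s) ds,
where Λ(R) = ((n−1)²/4)·Ct_κ(R/2)² + 8π²/R² + (4π(n−1)/R)·Ct_κ(R/2). -/
theorem stmt_9 (n : ℕ) (hn : 2 ≤ n) (κ : ℝ) (hκ : κ < 0) (ω : ℝ) (hω : 0 < ω)
    (R : ℝ) (hR : 0 < R)
    (S : ℝ → ℝ)
    (hS : ∀ t : ℝ, S t = Real.sinh (Real.sqrt (-κ) * t) / Real.sqrt (-κ))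
    (Ct : ℝ → ℝ)
    (hCt : ∀ t : ℝ, Ct t =
        Real.sqrt (-κ) *
          (Real.cosh (Real.sqrt (-κ) * t) / Real.sinh (Real.sqrt (-κ) * t)))
    (Sn : ℝ → ℝ) (hSn : ∀ r : ℝ, Sn r = ω * (S r) ^ (n - 1))
    (f : ℝ → ℝ)
    (hf : ∀ s : ℝ, f s = Real.sin (2 * π * (s - R / 2) / R) / Real.sqrt (Sn s)) :
    (∫ s in (R / 2)..R, (deriv f s) ^ 2 * Sn s) ≤
      ((((n : ℝ) - 1) ^ 2 / 4) * (Ct (R / 2)) ^ 2 + 8 * π ^ 2 / R ^ 2 +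
          (4 * π * ((n : ℝ) - 1) / R) * Ct (R / 2)) *
        ∫ s in (R / 2)..R, (f s) ^ 2 * Sn s := by
  have hπ : 0 < π := Real.pi_pos
  have hR' : R ≠ 0 := ne_of_gt hR
  set a := Real.sqrt (-κ) with ha_def
  have ha : 0 < a := Real.sqrt_pos.mpr (by linarith)
  obtain ⟨m, rfl⟩ : ∃ m, n = m + 2 := ⟨n - 2, by omega⟩
  set c := 2 * π / R with hc_def
  have hc : 0 < c := by positivity
  have hIcc : R / 2 ≤ R := by linarith
  have hsinh : ∀ s : ℝ, 0 < s → 0 < Real.sinh (a * s) := fun s hs =>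
    Real.sinh_pos_iff.mpr (by positivity)
  set K := Ct (R / 2) with hK_def
  have hK0 : 0 ≤ K := by
    rw [hK_def, hCt]
    have h1 := hsinh (R / 2) (by linarith)
    have h2 := Real.cosh_pos (x := a * (R / 2))
    positivity
  set B0 : ℝ := ((m : ℝ) + 1) / 2 * K with hB0_def
  have hB0 : 0 ≤ B0 := by positivity
  clear_value a c K B0
  -- angle rewriting
  have hang : ∀ s : ℝ, 2 * π * (s - R / 2) / R = c * s - π := by
    intro s; rw [hc_def]; field_simp
  -- monotonicity of Ct
  have hCtmono : ∀ s ∈ Set.Icc (R / 2) R, 0 ≤ Ct s ∧ Ct s ≤ K := by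
    intro s hs
    have hs0 : (0 : ℝ) < s := lt_of_lt_of_le (by linarith) hs.1
    have h1 := hsinh s hs0
    have h2 := hsinh (R / 2) (by linarith)
    have hc1 := Real.cosh_pos (x := a * s)
    have hc2 := Real.cosh_pos (x := a * (R / 2))
    constructor
    · rw [hCt]; positivity
    · rw [hK_def, hCt, hCt]
      have key : Real.cosh (a * s) * Real.sinh (a * (R / 2)) ≤
          Real.cosh (a * (R / 2)) * Real.sinh (a * s) := by
        have h3 : 0 ≤ Real.sinh (a * s - a * (R / 2)) := by
          apply Real.sinh_nonneg_iff.mpr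
          have : a * (R / 2) ≤ a * s := by
            apply mul_le_mul_of_nonneg_left hs.1 ha.le
          linarith
        rw [Real.sinh_sub] at h3
        nlinarith
      have : Real.cosh (a * s) / Real.sinh (a * s) ≤
          Real.cosh (a * (R / 2)) / Real.sinh (a * (R / 2)) := by
        rw [div_le_div_iff₀ h1 h2]; nlinarith
      nlinarith
  -- computing deriv f and simplification on the interval
  have hfe : f = fun s => Real.sin (2 * π * (s - R / 2) / R) / Real.sqrt (Sn s) :=
    funext hf
  have key : ∀ s ∈ Set.Icc (R / 2) R,
      (deriv f s) ^ 2 * Sn s =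
        (c * Real.cos (c * s - π) -
          (((m : ℝ) + 1) / 2 * Ct s) * Real.sin (c * s - π)) ^ 2 := by
    intro s hs
    have hs0 : (0 : ℝ) < s := lt_of_lt_of_le (by linarith) hs.1
    have hsh := hsinh s hs0
    have hSpos : 0 < S s := by rw [hS]; positivity
    have hSnpos : 0 < Sn s := by
      rw [hSn]; exact mul_pos hω (pow_pos hSpos _)
    have hq : 0 < Real.sqrt (Sn s) := Real.sqrt_pos.mpr hSnpos
    -- derivative of S
    have hdS : HasDerivAt S (Real.cosh (a * s)) s := by
      have h1 : HasDerivAt (fun t : ℝ => a * t) a s := by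
        simpa using (hasDerivAt_id s).const_mul a
      have h2 : HasDerivAt (fun t : ℝ => Real.sinh (a * t))
          (Real.cosh (a * s) * a) s := (Real.hasDerivAt_sinh (a * s)).comp s h1
      have h3 := h2.div_const a
      have h4 : Real.cosh (a * s) * a / a = Real.cosh (a * s) := by
        field_simp
      rw [h4] at h3
      have h5 : (fun t : ℝ => Real.sinh (a * t) / a) = S :=
        funext fun t => (hS t).symm
      rwa [h5] at h3
    -- derivative of Sn
    have hdSn : HasDerivAt Sn
        (ω * (((m : ℝ) + 1) * S s ^ m * Real.cosh (a * s))) s := by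
      have h1 := (hdS.pow (m + 1)).const_mul ω
      have h2 : (fun y => ω * (S ^ (m + 1)) y) = Sn := by
        funext r
        rw [hSn r]
        norm_num
      rw [h2] at h1
      exact h1.congr_deriv (by simp)
    -- derivative of the numerator
    have hdsin : HasDerivAt (fun t : ℝ => Real.sin (2 * π * (t - R / 2) / R))
        (Real.cos (2 * π * (s - R / 2) / R) * c) s := by
      have h1 : HasDerivAt (fun t : ℝ => 2 * π * (t - R / 2) / R) c s := by
        have := (((hasDerivAt_id s).sub_const (R / 2)).const_mul (2 * π)).div_const R
        simpa [hc_def] using this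
      exact (Real.hasDerivAt_sin _).comp s h1
    have hdq := hdSn.sqrt (ne_of_gt hSnpos)
    have hdf := hdsin.div hdq (ne_of_gt hq)
    have hd : deriv f s =
        (Real.cos (2 * π * (s - R / 2) / R) * c * Real.sqrt (Sn s) -
          Real.sin (2 * π * (s - R / 2) / R) *
            (ω * (((m : ℝ) + 1) * S s ^ m * Real.cosh (a * s)) /
              (2 * Real.sqrt (Sn s)))) / Real.sqrt (Sn s) ^ 2 := by
      rw [hfe]; exact hdf.deriv
    rw [hd]
    simp only [hang s]
    rw [hCt]
    have hq2 : Real.sqrt (Sn s) ^ 2 = Sn s := Real.sq_sqrt hSnpos.le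
    have hSn' : Sn s = ω * (Real.sinh (a * s) / a) ^ (m + 1) := by
      rw [hSn, hS]; norm_num
    have hSm : S s ^ m = (Real.sinh (a * s) / a) ^ m := by rw [hS]
    rw [hSm]
    -- key algebraic identity
    have hD : ω * (((m : ℝ) + 1) * (Real.sinh (a * s) / a) ^ m * Real.cosh (a * s)) =
        2 * (((m : ℝ) + 1) / 2 * (a * (Real.cosh (a * s) / Real.sinh (a * s)))) *
          Sn s := by
      rw [hSn', pow_succ]
      field_simp
    rw [hD]
    set B : ℝ := ((m : ℝ) + 1) / 2 * (a * (Real.cosh (a * s) / Real.sinh (a * s)))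
    rw [← hq2]
    set q := Real.sqrt (Sn s)
    have hqne : q ≠ 0 := ne_of_gt hq
    field_simp
    rw [Real.sqrt_sq hq.le]
    ring
  -- rewrite both integrals
  have hRHS : ∀ s ∈ Set.Icc (R / 2) R,
      (f s) ^ 2 * Sn s = Real.sin (c * s - π) ^ 2 := by
    intro s hs
    have hs0 : (0 : ℝ) < s := lt_of_lt_of_le (by linarith) hs.1
    have hsh := hsinh s hs0
    have hSpos : 0 < S s := by rw [hS]; positivity
    have hSnpos : 0 < Sn s := by
      rw [hSn]; exact mul_pos hω (pow_pos hSpos _)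
    rw [hf, hang, div_pow, Real.sq_sqrt hSnpos.le,
      div_mul_cancel₀ _ (ne_of_gt hSnpos)]
  have uIccEq : Set.uIcc (R / 2) R = Set.Icc (R / 2) R := Set.uIcc_of_le hIcc
  rw [intervalIntegral.integral_congr
      (f := fun s => (f s) ^ 2 * Sn s)
      (g := fun s => Real.sin (c * s - π) ^ 2)
      (by rw [uIccEq]; exact hRHS),
    intervalIntegral.integral_congr
      (f := fun s => (deriv f s) ^ 2 * Sn s)
      (g := fun s => (c * Real.cos (c * s - π) -
        (((m : ℝ) + 1) / 2 * Ct s) * Real.sin (c * s - π)) ^ 2)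
      (by rw [uIccEq]; exact key)]
  -- the sin² integral
  have Isin : (∫ s in (R / 2)..R, Real.sin (c * s - π) ^ 2) = R / 4 := by
    rw [intervalIntegral.integral_comp_mul_sub (fun x => Real.sin x ^ 2)
      (ne_of_gt hc) π]
    rw [show c * (R / 2) - π = 0 by rw [hc_def]; field_simp; ring,
      show c * R - π = π by rw [hc_def]; field_simp; ring]
    rw [integral_sin_sq]
    simp [Real.sin_pi, Real.sin_zero, Real.cos_pi, Real.cos_zero]
    rw [hc_def]
    field_simp
    ring
  have Icos : (∫ s in (R / 2)..R, Real.cos (c * s - π) ^ 2) = R / 4 := by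
    rw [intervalIntegral.integral_comp_mul_sub (fun x => Real.cos x ^ 2)
      (ne_of_gt hc) π]
    rw [show c * (R / 2) - π = 0 by rw [hc_def]; field_simp; ring,
      show c * R - π = π by rw [hc_def]; field_simp; ring]
    rw [integral_cos_sq]
    simp [Real.sin_pi, Real.sin_zero, Real.cos_pi, Real.cos_zero]
    rw [hc_def]
    field_simp
    ring
  -- continuity facts
  have hCtfun : Ct = fun t => a * (Real.cosh (a * t) / Real.sinh (a * t)) :=
    funext hCt
  have hCtcont : ContinuousOn Ct (Set.Icc (R / 2) R) := by
    rw [hCtfun]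
    apply ContinuousOn.mul continuousOn_const
    apply ContinuousOn.div
    · exact (Real.continuous_cosh.comp (continuous_const.mul continuous_id)).continuousOn
    · exact (Real.continuous_sinh.comp (continuous_const.mul continuous_id)).continuousOn
    · intro x hx
      exact ne_of_gt (hsinh x (lt_of_lt_of_le (by linarith) hx.1))
  have hφcont : ContinuousOn (fun s =>
      (c * Real.cos (c * s - π) -
        (((m : ℝ) + 1) / 2 * Ct s) * Real.sin (c * s - π)) ^ 2)
      (Set.uIcc (R / 2) R) := by
    rw [uIccEq]
    apply ContinuousOn.pow
    apply ContinuousOn.sub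
    · exact (continuous_const.mul (Real.continuous_cos.comp
        ((continuous_const.mul continuous_id).sub continuous_const))).continuousOn
    · exact ((continuousOn_const.mul hCtcont).mul
        (Real.continuous_sin.comp
          ((continuous_const.mul continuous_id).sub continuous_const)).continuousOn)
  have hgcont : Continuous (fun s : ℝ =>
      c ^ 2 * Real.cos (c * s - π) ^ 2 + B0 ^ 2 * Real.sin (c * s - π) ^ 2 +
        c * B0) := by
    apply Continuous.add
    apply Continuous.add
    · exact continuous_const.mul ((Real.continuous_cos.comp
        ((continuous_const.mul continuous_id).sub continuous_const)).pow 2)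
    · exact continuous_const.mul ((Real.continuous_sin.comp
        ((continuous_const.mul continuous_id).sub continuous_const)).pow 2)
    · exact continuous_const
  -- pointwise bound and integral comparison
  have hbound : ∀ s ∈ Set.Icc (R / 2) R,
      (c * Real.cos (c * s - π) -
        (((m : ℝ) + 1) / 2 * Ct s) * Real.sin (c * s - π)) ^ 2 ≤
      c ^ 2 * Real.cos (c * s - π) ^ 2 + B0 ^ 2 * Real.sin (c * s - π) ^ 2 +
        c * B0 := by
    intro s hs
    obtain ⟨h0, h1⟩ := hCtmono s hs
    set si := Real.sin (c * s - π)
    set co := Real.cos (c * s - π)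
    have hsc : si ^ 2 + co ^ 2 = 1 := Real.sin_sq_add_cos_sq _
    set B : ℝ := ((m : ℝ) + 1) / 2 * Ct s with hB_def
    clear_value si co B
    have hBnn : 0 ≤ B := by rw [hB_def]; exact mul_nonneg (by positivity) h0
    have hBle : B ≤ B0 := by
      rw [hB_def, hB0_def]
      apply mul_le_mul_of_nonneg_left h1
      positivity
    have h2 : B ^ 2 * si ^ 2 ≤ B0 ^ 2 * si ^ 2 := by
      apply mul_le_mul_of_nonneg_right _ (sq_nonneg si)
      exact pow_le_pow_left₀ hBnn hBle 2
    have h3 : -(2 * si * co) ≤ 1 := by nlinarith [sq_nonneg (si + co)]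
    have h4 : c * B * (-(2 * si * co)) ≤ c * B * 1 :=
      mul_le_mul_of_nonneg_left h3 (mul_nonneg hc.le hBnn)
    have h5 : c * B ≤ c * B0 := mul_le_mul_of_nonneg_left hBle hc.le
    nlinarith [h2, h4, h5]
  have hmainle : (∫ s in (R / 2)..R,
      (c * Real.cos (c * s - π) -
        (((m : ℝ) + 1) / 2 * Ct s) * Real.sin (c * s - π)) ^ 2) ≤
      ∫ s in (R / 2)..R,
        (c ^ 2 * Real.cos (c * s - π) ^ 2 + B0 ^ 2 * Real.sin (c * s - π) ^ 2 +
          c * B0) := by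
    apply intervalIntegral.integral_mono_on hIcc
    · exact hφcont.intervalIntegrable
    · exact hgcont.intervalIntegrable _ _
    · exact hbound
  have hgint : (∫ s in (R / 2)..R,
      (c ^ 2 * Real.cos (c * s - π) ^ 2 + B0 ^ 2 * Real.sin (c * s - π) ^ 2 +
        c * B0)) = c ^ 2 * (R / 4) + B0 ^ 2 * (R / 4) + c * B0 * (R / 2) := by
    have i1 : IntervalIntegrable (fun s : ℝ => c ^ 2 * Real.cos (c * s - π) ^ 2)
        MeasureTheory.volume (R / 2) R := by
      apply Continuous.intervalIntegrable
      exact continuous_const.mul ((Real.continuous_cos.comp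
        ((continuous_const.mul continuous_id).sub continuous_const)).pow 2)
    have i2 : IntervalIntegrable (fun s : ℝ => B0 ^ 2 * Real.sin (c * s - π) ^ 2)
        MeasureTheory.volume (R / 2) R := by
      apply Continuous.intervalIntegrable
      exact continuous_const.mul ((Real.continuous_sin.comp
        ((continuous_const.mul continuous_id).sub continuous_const)).pow 2)
    have i3 : IntervalIntegrable (fun _ : ℝ => c * B0)
        MeasureTheory.volume (R / 2) R := intervalIntegrable_const
    rw [intervalIntegral.integral_add (i1.add i2) i3,
      intervalIntegral.integral_add i1 i2,
      intervalIntegral.integral_const_mul, intervalIntegral.integral_const_mul,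
      Isin, Icos, intervalIntegral.integral_const, smul_eq_mul]
    ring
  rw [Isin]
  refine le_trans hmainle ?_
  rw [hgint]
  push_cast
  have hc4 : c ^ 2 = 4 * π ^ 2 / R ^ 2 := by rw [hc_def]; field_simp; ring
  have hB0K : ((m : ℝ) + 2 - 1) ^ 2 / 4 * K ^ 2 = B0 ^ 2 := by
    rw [hB0_def]; ring
  have h8 : 8 * π ^ 2 / R ^ 2 = 2 * c ^ 2 := by rw [hc4]; ring
  have h4cb : 4 * π * ((m : ℝ) + 2 - 1) / R * K = 4 * (c * B0) := by
    rw [hB0_def, hc_def]; field_simp; ring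
  rw [hB0K, h8, h4cb]
  nlinarith [mul_nonneg (mul_nonneg hc.le hB0) hR.le, mul_nonneg (mul_nonneg hc.le hc.le) hR.le]
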